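/- (Barrier derivative identity for the Euler-factor tilt.) Fix t ∈ (0,1) and let F(λ) = Cov^t_λ(log h_t, x²). If λ₀ ∈ ℝ satisfies F(λ₀) = 0, then F is differentiable at λ₀ with HasDerivAt F (−Cov^t_{λ₀}((log h_t)², x²)) λ₀, where Cov^t_{λ₀}((log h_t)², x²) = E^t_{λ₀}[(Real.log(h_t(x)))²·x²] − E^t_{λ₀}[(Real.log(h_t(x)))²]·E^t_{λ₀}[x²]. -/

import Mathlib

open intervalIntegral

/-- The Euler-factor polynomial `h_t(x) = 1 − 2tx + t²`. -/
noncomputable def eulerH (t x : ℝ) : ℝ := 1 - 2 * t * x + t ^ 2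

/-- The Euler-factor tilted weight `u_{t,λ}(x) = √(1 − x²)·h_t(x)^{−λ}` on `[-1,1]`. -/
noncomputable def eulerW (t lam x : ℝ) : ℝ := Real.sqrt (1 - x ^ 2) * eulerH t x ^ (-lam)

/-- The normalization constant `Z_t(λ)`. -/
noncomputable def eulerZ (t lam : ℝ) : ℝ := ∫ x in (-1 : ℝ)..1, eulerW t lam x

/-- The mean `E^t_λ[f]` under the Euler-factor tilted semicircle measure. -/
noncomputable def eulerE (t lam : ℝ) (f : ℝ → ℝ) : ℝ :=
  (eulerZ t lam)⁻¹ * ∫ x in (-1 : ℝ)..1, f x * eulerW t lam x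

/-- The covariance `Cov^t_λ(f, g)` under the Euler-factor tilted semicircle measure. -/
noncomputable def eulerCov (t lam : ℝ) (f g : ℝ → ℝ) : ℝ :=
  eulerE t lam (fun x => f x * g x) - eulerE t lam f * eulerE t lam g

lemma eulerH_cont (t : ℝ) : Continuous (eulerH t) := by
  unfold eulerH; continuity

lemma eulerH_pos {t x : ℝ} (ht0 : 0 < t) (ht1 : t < 1) (hx : x ≤ 1) : 0 < eulerH t x := by
  simp only [eulerH]; nlinarith

lemma eulerH_le {t x : ℝ} (ht0 : 0 < t) (hx : -1 ≤ x) : eulerH t x ≤ (1 + t) ^ 2 := by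
  simp only [eulerH]; nlinarith

lemma eulerH_ge {t x : ℝ} (ht0 : 0 < t) (hx : x ≤ 1) : (1 - t) ^ 2 ≤ eulerH t x := by
  simp only [eulerH]; nlinarith

lemma contOn_eulerW {t : ℝ} (ht0 : 0 < t) (ht1 : t < 1) (lam : ℝ) :
    ContinuousOn (eulerW t lam) (Set.Icc (-1 : ℝ) 1) := by
  apply ContinuousOn.mul
  · exact (Real.continuous_sqrt.comp (by continuity)).continuousOn
  · exact ContinuousOn.rpow_const (eulerH_cont t).continuousOn
      (fun x hx => Or.inl (ne_of_gt (eulerH_pos ht0 ht1 hx.2)))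

lemma contOn_log_eulerH {t : ℝ} (ht0 : 0 < t) (ht1 : t < 1) :
    ContinuousOn (fun x => Real.log (eulerH t x)) (Set.Icc (-1 : ℝ) 1) :=
  ContinuousOn.log (eulerH_cont t).continuousOn
    (fun x hx => ne_of_gt (eulerH_pos ht0 ht1 hx.2))

lemma intervalIntegrable_eulerW {t : ℝ} (ht0 : 0 < t) (ht1 : t < 1) {f : ℝ → ℝ}
    (hf : ContinuousOn f (Set.Icc (-1 : ℝ) 1)) (lam : ℝ) :
    IntervalIntegrable (fun x => f x * eulerW t lam x) MeasureTheory.volume (-1) 1 := by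
  apply ContinuousOn.intervalIntegrable
  rw [Set.uIcc_of_le (by norm_num : (-1:ℝ) ≤ 1)]
  exact hf.mul (contOn_eulerW ht0 ht1 lam)

lemma eulerZ_pos {t : ℝ} (ht0 : 0 < t) (ht1 : t < 1) (lam : ℝ) : 0 < eulerZ t lam := by
  have hint : IntervalIntegrable (eulerW t lam) MeasureTheory.volume (-1) 1 := by
    have := intervalIntegrable_eulerW ht0 ht1 (continuous_const.continuousOn :
      ContinuousOn (fun _ => (1:ℝ)) (Set.Icc (-1:ℝ) 1)) lam
    simpa using this
  refine intervalIntegral.intervalIntegral_pos_of_pos_on hint ?_ (by norm_num)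
  intro x hx
  have h1 : 0 < 1 - x ^ 2 := by nlinarith [hx.1, hx.2]
  have h2 : 0 < eulerH t x := eulerH_pos ht0 ht1 (le_of_lt hx.2)
  exact mul_pos (Real.sqrt_pos.mpr h1) (Real.rpow_pos_of_pos h2 _)

lemma hasDerivAt_eulerInt {t : ℝ} (ht0 : 0 < t) (ht1 : t < 1) {f : ℝ → ℝ}
    (hf : ContinuousOn f (Set.Icc (-1 : ℝ) 1)) (lam₀ : ℝ) :
    HasDerivAt (fun lam => ∫ x in (-1 : ℝ)..1, f x * eulerW t lam x)
      (-∫ x in (-1 : ℝ)..1, (Real.log (eulerH t x) * f x) * eulerW t lam₀ x) lam₀ := by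
  obtain ⟨Mf, hMf⟩ := isCompact_Icc.exists_bound_of_continuousOn hf
  have hMf0 : 0 ≤ Mf := le_trans (norm_nonneg _) (hMf 0 (by norm_num))
  set M : ℝ := max (-(Real.log ((1 - t) ^ 2))) (Real.log ((1 + t) ^ 2)) with hMdef
  have hM0 : 0 ≤ M := by
    refine le_trans ?_ (le_max_right _ _)
    apply Real.log_nonneg; nlinarith
  have hlog : ∀ x ∈ Set.Icc (-1 : ℝ) 1, |Real.log (eulerH t x)| ≤ M := by
    intro x hx
    have hp : (0:ℝ) < (1 - t) ^ 2 := by nlinarith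
    rw [abs_le]
    constructor
    · have := Real.log_le_log hp (eulerH_ge ht0 hx.2)
      have h2 : -M ≤ Real.log ((1 - t) ^ 2) := by
        have := le_max_left (-(Real.log ((1 - t) ^ 2))) (Real.log ((1 + t) ^ 2))
        linarith
      linarith
    · have := Real.log_le_log (eulerH_pos ht0 ht1 hx.2) (eulerH_le ht0 hx.1)
      exact le_trans this (le_max_right _ _)
  set K : ℝ := Real.exp ((|lam₀| + 1) * M) with hKdef
  have hW : ∀ lam ∈ Metric.ball lam₀ 1, ∀ x ∈ Set.Icc (-1 : ℝ) 1,
      0 ≤ eulerW t lam x ∧ eulerW t lam x ≤ K := by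
    intro lam hlam x hx
    have hpos : 0 < eulerH t x := eulerH_pos ht0 ht1 hx.2
    have hsq : Real.sqrt (1 - x ^ 2) ≤ 1 :=
      Real.sqrt_le_one.mpr (by nlinarith [hx.1, hx.2])
    have hsq0 : 0 ≤ Real.sqrt (1 - x ^ 2) := Real.sqrt_nonneg _
    have hlamb : |lam| ≤ |lam₀| + 1 := by
      have := mem_ball_iff_norm.mp hlam
      calc |lam| = |lam₀ + (lam - lam₀)| := by ring_nf
        _ ≤ |lam₀| + |lam - lam₀| := abs_add_le _ _
        _ ≤ |lam₀| + 1 := by simp only [Real.norm_eq_abs] at this; linarith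
    have hrp : eulerH t x ^ (-lam) ≤ K := by
      rw [Real.rpow_def_of_pos hpos, hKdef]
      apply Real.exp_le_exp.mpr
      calc Real.log (eulerH t x) * -lam ≤ |Real.log (eulerH t x) * -lam| := le_abs_self _
        _ = |Real.log (eulerH t x)| * |lam| := by rw [abs_mul, abs_neg]
        _ ≤ M * (|lam₀| + 1) := by
            apply mul_le_mul (hlog x hx) hlamb (abs_nonneg _) hM0
        _ = (|lam₀| + 1) * M := by ring
    constructor
    · exact mul_nonneg hsq0 (le_of_lt (Real.rpow_pos_of_pos hpos _))
    · calc eulerW t lam x = Real.sqrt (1 - x ^ 2) * eulerH t x ^ (-lam) := rfl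
        _ ≤ 1 * K := mul_le_mul hsq hrp (le_of_lt (Real.rpow_pos_of_pos hpos _)) one_pos.le
        _ = K := one_mul K
  have hIoc : Set.uIoc (-1 : ℝ) 1 = Set.Ioc (-1 : ℝ) 1 := Set.uIoc_of_le (by norm_num)
  have hsub : Set.Ioc (-1 : ℝ) 1 ⊆ Set.Icc (-1 : ℝ) 1 := Set.Ioc_subset_Icc_self
  have main := intervalIntegral.hasDerivAt_integral_of_dominated_loc_of_deriv_le
    (F := fun lam x => f x * eulerW t lam x)
    (F' := fun lam x => -((Real.log (eulerH t x) * f x) * eulerW t lam x))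
    (bound := fun _ => Mf * (M * K)) (a := -1) (b := 1) (μ := MeasureTheory.volume)
    (x₀ := lam₀) (Metric.ball_mem_nhds lam₀ one_pos)
    (Filter.Eventually.of_forall fun lam => by
      rw [hIoc]
      exact ((hf.mul (contOn_eulerW ht0 ht1 lam)).mono hsub).aestronglyMeasurable
        measurableSet_Ioc)
    (intervalIntegrable_eulerW ht0 ht1 hf lam₀)
    (by
      rw [hIoc]
      exact ((((contOn_log_eulerH ht0 ht1).mul hf).mul
        (contOn_eulerW ht0 ht1 lam₀)).neg.mono hsub).aestronglyMeasurable measurableSet_Ioc)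
    (Filter.Eventually.of_forall fun x hx lam hlam => by
      rw [hIoc] at hx
      have hx' := hsub hx
      obtain ⟨hW0, hWK⟩ := hW lam hlam x hx'
      have : ‖-((Real.log (eulerH t x) * f x) * eulerW t lam x)‖
          = |Real.log (eulerH t x)| * ‖f x‖ * eulerW t lam x := by
        rw [norm_neg, Real.norm_eq_abs, abs_mul, abs_mul, abs_of_nonneg hW0, Real.norm_eq_abs]
      rw [this]
      calc |Real.log (eulerH t x)| * ‖f x‖ * eulerW t lam x
          ≤ M * Mf * K := by
            apply mul_le_mul _ hWK hW0 (by positivity)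
            exact mul_le_mul (hlog x hx') (hMf x hx') (norm_nonneg _) hM0
        _ = Mf * (M * K) := by ring)
    (intervalIntegrable_const)
    (Filter.Eventually.of_forall fun x hx lam hlam => by
      rw [hIoc] at hx
      have hpos : 0 < eulerH t x := eulerH_pos ht0 ht1 (hsub hx).2
      have key : HasDerivAt (fun lam : ℝ => eulerH t x ^ (-lam))
          (-(Real.log (eulerH t x)) * eulerH t x ^ (-lam)) lam := by
        have d1 : HasDerivAt (fun lam : ℝ => Real.log (eulerH t x) * -lam)
            (Real.log (eulerH t x) * -1) lam := (hasDerivAt_neg lam).const_mul _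
        have d2 := d1.exp
        have heq : (fun lam : ℝ => Real.exp (Real.log (eulerH t x) * -lam))
            = fun lam : ℝ => eulerH t x ^ (-lam) := by
          funext y; rw [Real.rpow_def_of_pos hpos]
        rw [heq] at d2
        convert d2 using 1
        rw [Real.rpow_def_of_pos hpos]; ring
      have := key.const_mul (f x * Real.sqrt (1 - x ^ 2))
      convert this using 1
      · rfl
      · funext y; simp only [eulerW]; ring
      · simp only [eulerW]; ring)
  have h2 := main.2
  rw [intervalIntegral.integral_neg] at h2
  exact h2

lemma hasDerivAt_eulerE {t : ℝ} (ht0 : 0 < t) (ht1 : t < 1) (f : ℝ → ℝ)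
    (hf : ContinuousOn f (Set.Icc (-1 : ℝ) 1)) (lam₀ : ℝ) :
    HasDerivAt (fun lam => eulerE t lam f)
      (eulerE t lam₀ (fun x => Real.log (eulerH t x)) * eulerE t lam₀ f
        - eulerE t lam₀ (fun x => Real.log (eulerH t x) * f x)) lam₀ := by
  have hZne : eulerZ t lam₀ ≠ 0 := ne_of_gt (eulerZ_pos ht0 ht1 lam₀)
  have hZ' : HasDerivAt (fun lam => eulerZ t lam)
      (-∫ x in (-1 : ℝ)..1, Real.log (eulerH t x) * eulerW t lam₀ x) lam₀ := by
    have h := hasDerivAt_eulerInt ht0 ht1 (f := fun _ => (1:ℝ))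
      continuous_const.continuousOn lam₀
    simp only [one_mul, mul_one] at h
    exact h
  have hI := hasDerivAt_eulerInt ht0 ht1 (f := f) hf lam₀
  have hE := (hZ'.inv hZne).mul hI
  have hfun : (fun lam => (eulerZ t lam)⁻¹ * ∫ x in (-1 : ℝ)..1, f x * eulerW t lam x)
      = fun lam => eulerE t lam f := by funext lam; rfl
  change HasDerivAt (fun lam => (eulerZ t lam)⁻¹ * ∫ x in (-1 : ℝ)..1, f x * eulerW t lam x) _ lam₀ at hE
  rw [hfun] at hE
  convert hE using 1
  simp only [eulerE, Pi.inv_apply]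
  field_simp
  ring

/-- Barrier derivative identity for the Euler-factor tilt: if
`F(λ) = Cov^t_λ(log h_t, x²)` vanishes at `λ₀`, then `F` is differentiable at
`λ₀` with derivative `−Cov^t_{λ₀}((log h_t)², x²)`. -/
theorem eulerCov_barrier_deriv (t : ℝ) (ht0 : 0 < t) (ht1 : t < 1) (lam₀ : ℝ)
    (hzero : eulerCov t lam₀ (fun x => Real.log (eulerH t x)) (fun x => x ^ 2) = 0) :
    HasDerivAt (fun lam => eulerCov t lam (fun x => Real.log (eulerH t x)) (fun x => x ^ 2))
      (-(eulerCov t lam₀ (fun x => (Real.log (eulerH t x)) ^ 2) (fun x => x ^ 2))) lam₀ := by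
  have hL := contOn_log_eulerH ht0 ht1
  have hg : ContinuousOn (fun x : ℝ => x ^ 2) (Set.Icc (-1 : ℝ) 1) :=
    (continuous_pow 2).continuousOn
  have hA := hasDerivAt_eulerE ht0 ht1 (fun x => Real.log (eulerH t x) * x ^ 2)
    (hL.mul hg) lam₀
  have hB := hasDerivAt_eulerE ht0 ht1 (fun x => Real.log (eulerH t x)) hL lam₀
  have hC := hasDerivAt_eulerE ht0 ht1 (fun x : ℝ => x ^ 2) hg lam₀
  have hD := hA.sub (hB.mul hC)
  simp only [eulerCov] at hzero ⊢
  beta_reduce at hD hzero ⊢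
  convert hD using 1
  · rfl
  · rfl
  · rfl
  have heq1 : (fun x => Real.log (eulerH t x) * (Real.log (eulerH t x) * x ^ 2))
      = fun x => Real.log (eulerH t x) ^ 2 * x ^ 2 := by funext x; ring
  have heq2 : (fun x => Real.log (eulerH t x) * Real.log (eulerH t x))
      = fun x => Real.log (eulerH t x) ^ 2 := by funext x; ring
  rw [← heq1, ← heq2]
  linear_combination (-2 * eulerE t lam₀ (fun x => Real.log (eulerH t x))) * hzero
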